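/- arXiv:2212.03095 — 2 statements merged into one kernel-verified Lean document; each statement's English description precedes it below -/
import Mathlib

section
/- Stein's lemma, one-dimensional: let σ > 0 and let γ be the Gaussian measure on ℝ with mean 0 and variance σ². If f : ℝ → ℝ is differentiable and L-Lipschitz for some L ≥ 0, then σ² · ∫ f′(z) dγ(z) = ∫ z · f(z) dγ(z). -/
open MeasureTheory ProbabilityTheory Real Filter Set
open scoped NNReal ENNReal Topology

/-- Stein's lemma in one dimension: for the Gaussian measure `γ = N(0, σ²)` and a
differentiable `L`-Lipschitz function `f : ℝ → ℝ`, we have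
`σ² ∫ f'(z) dγ(z) = ∫ z f(z) dγ(z)`. -/
theorem stmt2 (σ : ℝ) (hσ : 0 < σ) (L : ℝ) (hL : 0 ≤ L)
    (f : ℝ → ℝ) (hf : Differentiable ℝ f)
    (hLip : ∀ z z' : ℝ, |f z - f z'| ≤ L * |z - z'|) :
    σ ^ 2 * (∫ z, deriv f z ∂(gaussianReal 0 ⟨σ ^ 2, sq_nonneg σ⟩))
      = ∫ z, z * f z ∂(gaussianReal 0 ⟨σ ^ 2, sq_nonneg σ⟩) := by
  set v : ℝ≥0 := ⟨σ ^ 2, sq_nonneg σ⟩ with hv_def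
  have hσ2 : (0:ℝ) < σ ^ 2 := by positivity
  have hvcoe : (v : ℝ) = σ ^ 2 := rfl
  have hv : v ≠ 0 := by
    intro h
    have : (v : ℝ) = 0 := by rw [h]; simp
    rw [hvcoe] at this
    exact hσ2.ne' this
  set b : ℝ := (2 * σ ^ 2)⁻¹ with hb_def
  have hb : 0 < b := by positivity
  set c : ℝ := (Real.sqrt (2 * π * σ ^ 2))⁻¹ with hc_def
  have hc : 0 ≤ c := by positivity
  set P : ℝ → ℝ := fun z => c * Real.exp (-b * z ^ 2) with hP_def
  have hPpos : ∀ z, 0 ≤ P z := fun z => by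
    simp only [hP_def]; positivity
  have hρ : ∀ z, gaussianPDFReal 0 v z = P z := by
    intro z
    simp only [gaussianPDFReal, hP_def, sub_zero, hvcoe, hc_def]
    congr 1
    rw [hb_def]
    field_simp
  have hPcont : Continuous P := by
    simp only [hP_def]; fun_prop
  -- integral conversion
  have hconv : ∀ g : ℝ → ℝ, ∫ z, g z ∂(gaussianReal 0 v) = ∫ z, P z * g z := by
    intro g
    rw [gaussianReal_of_var_ne_zero 0 hv]
    have he : gaussianPDF 0 v
        = fun x => ((Real.toNNReal (gaussianPDFReal 0 v x) : ℝ≥0) : ℝ≥0∞) := rfl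
    rw [he, integral_withDensity_eq_integral_smul
        ((measurable_gaussianPDFReal 0 v).real_toNNReal) g]
    congr 1 with z
    rw [NNReal.smul_def, Real.coe_toNNReal _ (gaussianPDFReal_nonneg 0 v z), hρ z,
      smul_eq_mul]
  -- derivative bound from Lipschitz
  have hL' : ∀ z, |deriv f z| ≤ L := by
    intro z
    have h := hasDerivAt_iff_tendsto_slope.mp (hf z).hasDerivAt
    refine le_of_tendsto h.abs ?_
    filter_upwards [self_mem_nhdsWithin] with y hy
    have hyz : y - z ≠ 0 := sub_ne_zero.mpr hy
    rw [slope_def_field, abs_div]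
    rw [div_le_iff₀ (abs_pos.mpr hyz)]
    exact hLip y z
  -- linear growth bound
  have hgrow : ∀ z, |f z| ≤ |f 0| + L * |z| := by
    intro z
    have := hLip z 0
    simp only [sub_zero] at this
    calc |f z| = |f 0 + (f z - f 0)| := by ring_nf
      _ ≤ |f 0| + |f z - f 0| := abs_add_le _ _
      _ ≤ |f 0| + L * |z| := by linarith
  -- derivative of P
  have hP' : ∀ z, HasDerivAt P (c * (Real.exp (-b * z ^ 2) * (-b * (2 * z)))) z := by
    intro z
    have h1 : HasDerivAt (fun z : ℝ => -b * z ^ 2) (-b * (2 * z)) z := by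
      simpa using (hasDerivAt_pow 2 z).const_mul (-b)
    exact h1.exp.const_mul c
  set F : ℝ → ℝ := fun z => f z * P z with hF_def
  set G : ℝ → ℝ := fun z => deriv f z * P z - z * f z * P z / σ ^ 2 with hG_def
  have hF' : ∀ z, HasDerivAt F (G z) z := by
    intro z
    have h : HasDerivAt (fun y => f y * P y) _ z := (hf z).hasDerivAt.mul (hP' z)
    convert h using 1
    simp only [hG_def, hP_def, hb_def]
    field_simp
    ring
  -- integrability
  have hexp : Integrable (fun z : ℝ => Real.exp (-b * z ^ 2)) := integrable_exp_neg_mul_sq hb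
  have hxexp : Integrable (fun z : ℝ => z * Real.exp (-b * z ^ 2)) :=
    integrable_mul_exp_neg_mul_sq hb
  have hx2exp : Integrable (fun z : ℝ => z ^ 2 * Real.exp (-b * z ^ 2)) := by
    have h := integrable_rpow_mul_exp_neg_mul_sq hb (s := 2) (by norm_num)
    have : ∀ z : ℝ, z ^ (2:ℝ) = z ^ (2:ℕ) := fun z => by
      rw [show (2:ℝ) = ((2:ℕ):ℝ) by norm_num, Real.rpow_natCast]
    simpa [this] using h
  have hi1 : Integrable (fun z => deriv f z * P z) := by
    refine (hexp.const_mul (c * L)).mono' ?_ ?_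
    · exact (measurable_deriv f).aestronglyMeasurable.mul hPcont.aestronglyMeasurable
    · refine Eventually.of_forall fun z => ?_
      have h0 : 0 ≤ P z := hPpos z
      rw [norm_mul, Real.norm_eq_abs, Real.norm_eq_abs, abs_of_nonneg h0]
      calc |deriv f z| * P z ≤ L * P z := by
            exact mul_le_mul_of_nonneg_right (hL' z) h0
        _ = c * L * Real.exp (-b * z ^ 2) := by simp only [hP_def]; ring
  have hi2' : Integrable (fun z => z * f z * P z) := by
    refine Integrable.mono' (g := fun z => c * |f 0| * |z * Real.exp (-b * z ^ 2)|
        + c * L * (z ^ 2 * Real.exp (-b * z ^ 2)))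
      (((hxexp.norm).const_mul _).add (hx2exp.const_mul _)) ?_ ?_
    · exact (Continuous.aestronglyMeasurable (continuous_id.mul hf.continuous)).mul hPcont.aestronglyMeasurable
    · refine Eventually.of_forall fun z => ?_
      have h0 : 0 ≤ P z := hPpos z
      have he : (0:ℝ) < Real.exp (-b * z ^ 2) := Real.exp_pos _
      rw [Real.norm_eq_abs, abs_mul, abs_mul, abs_of_nonneg h0]
      have h1 : |z| * |f z| ≤ |z| * (|f 0| + L * |z|) :=
        mul_le_mul_of_nonneg_left (hgrow z) (abs_nonneg z)
      have h2 : |z| * |f z| * P z ≤ |z| * (|f 0| + L * |z|) * P z :=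
        mul_le_mul_of_nonneg_right h1 h0
      calc |z| * |f z| * P z ≤ |z| * (|f 0| + L * |z|) * P z := h2
        _ = c * |f 0| * (|z| * Real.exp (-b * z ^ 2))
            + c * L * (|z| ^ 2 * Real.exp (-b * z ^ 2)) := by
            simp only [hP_def]; ring
        _ = c * |f 0| * |z * Real.exp (-b * z ^ 2)|
            + c * L * (z ^ 2 * Real.exp (-b * z ^ 2)) := by
            rw [abs_mul, abs_of_nonneg he.le, sq_abs]
  have hi2 : Integrable (fun z => z * f z * P z / σ ^ 2) := hi2'.div_const _
  have hiG : Integrable G := hi1.sub hi2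
  -- decay of F at infinity
  have hFtend : Tendsto F (cocompact ℝ) (𝓝 0) := by
    have h0 : Tendsto (fun z : ℝ => |z| ^ (0:ℝ) * Real.exp (-b * z ^ 2)) (cocompact ℝ) (𝓝 0) :=
      tendsto_rpow_abs_mul_exp_neg_mul_sq_cocompact hb 0
    have h1 : Tendsto (fun z : ℝ => |z| ^ (1:ℝ) * Real.exp (-b * z ^ 2)) (cocompact ℝ) (𝓝 0) :=
      tendsto_rpow_abs_mul_exp_neg_mul_sq_cocompact hb 1
    simp only [Real.rpow_zero, one_mul, Real.rpow_one] at h0 h1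
    have hB : Tendsto (fun z : ℝ => c * |f 0| * Real.exp (-b * z ^ 2)
        + c * L * (|z| * Real.exp (-b * z ^ 2))) (cocompact ℝ) (𝓝 0) := by
      simpa using (h0.const_mul (c * |f 0|)).add (h1.const_mul (c * L))
    refine squeeze_zero_norm (fun z => ?_) hB
    have h0' : 0 ≤ P z := hPpos z
    have he : (0:ℝ) < Real.exp (-b * z ^ 2) := Real.exp_pos _
    rw [Real.norm_eq_abs, abs_mul, abs_of_nonneg h0']
    calc |f z| * P z ≤ (|f 0| + L * |z|) * P z :=
          mul_le_mul_of_nonneg_right (hgrow z) h0'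
      _ = c * |f 0| * Real.exp (-b * z ^ 2) + c * L * (|z| * Real.exp (-b * z ^ 2)) := by
          simp only [hP_def]; ring
  have hbot : Tendsto F atBot (𝓝 0) :=
    hFtend.mono_left (by rw [cocompact_eq_atBot_atTop]; exact le_sup_left)
  have htop : Tendsto F atTop (𝓝 0) :=
    hFtend.mono_left (by rw [cocompact_eq_atBot_atTop]; exact le_sup_right)
  have hG0 : ∫ z, G z = 0 := by
    simpa using integral_of_hasDerivAt_of_tendsto hF' hiG hbot htop
  have hsplit : ∫ z, deriv f z * P z = (∫ z, z * f z * P z) / σ ^ 2 := by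
    have h := integral_sub hi1 hi2
    rw [hG_def] at hG0
    rw [hG0] at h
    have h2 : ∫ z, z * f z * P z / σ ^ 2 = (∫ z, z * f z * P z) / σ ^ 2 := integral_div _ _
    rw [h2] at h
    linarith
  rw [hconv (deriv f), hconv (fun z => z * f z)]
  simp_rw [mul_comm (P _)]
  rw [hsplit]
  field_simp
end

section
/- Stein's lemma, multivariate isotropic case: let d ≥ 1, σ > 0, and let f : ℝ^d → ℝ be differentiable and L-Lipschitz for some L ≥ 0. Then σ² · ∫ ∇f(z) dγ_σ(z) = ∫ f(z) · z dγ_σ(z), as an equality of vectors in ℝ^d (Bochner integrals). -/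
open MeasureTheory ProbabilityTheory RealInnerProductSpace

/-- The centered isotropic Gaussian measure `N(0, σ² I_d)` on `ℝ^d`, realized as the
`d`-fold product of the one-dimensional Gaussian `N(0, σ²)`. -/
noncomputable def gaussE (d : ℕ) (σ : ℝ) : Measure (EuclideanSpace ℝ (Fin d)) :=
  (Measure.pi fun _ : Fin d => gaussianReal 0 ⟨σ ^ 2, sq_nonneg σ⟩).map
    (MeasurableEquiv.toLp 2 (Fin d → ℝ))

open Filter Real Set
open scoped ENNReal NNReal Topology

noncomputable def gvar (σ : ℝ) : ℝ≥0 := ⟨σ ^ 2, sq_nonneg σ⟩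

lemma gvar_coe (σ : ℝ) : (gvar σ : ℝ) = σ ^ 2 := rfl

lemma gvar_ne_zero {σ : ℝ} (hσ : 0 < σ) : gvar σ ≠ 0 := by
  intro h
  have : (gvar σ : ℝ) = 0 := by rw [h]; simp
  change σ ^ 2 = 0 at this
  nlinarith

/-- Explicit Gaussian weight. -/
noncomputable def gw (σ : ℝ) (x : ℝ) : ℝ := (√(2 * π * σ ^ 2))⁻¹ * rexp (-(2 * σ ^ 2)⁻¹ * x ^ 2)

lemma gw_eq (σ : ℝ) : gaussianPDFReal 0 (gvar σ) = gw σ := by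
  funext x
  simp only [gaussianPDFReal, gvar_coe, gw, sub_zero]
  congr 1
  rw [div_eq_mul_inv]
  ring_nf

lemma gw_nonneg (σ : ℝ) (x : ℝ) : 0 ≤ gw σ x := by
  unfold gw; positivity

lemma gw_cont (σ : ℝ) : Continuous (gw σ) := by
  unfold gw
  fun_prop

lemma hb_pos {σ : ℝ} (hσ : 0 < σ) : 0 < (2 * σ ^ 2)⁻¹ := by positivity

lemma gw_integrable {σ : ℝ} (hσ : 0 < σ) : Integrable (gw σ) := by
  unfold gw
  exact (integrable_exp_neg_mul_sq (hb_pos hσ)).const_mul _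

lemma gw_abs_integrable {σ : ℝ} (hσ : 0 < σ) : Integrable (fun x => |x| * gw σ x) := by
  have h := (integrable_mul_exp_neg_mul_sq (hb_pos hσ)).abs.const_mul (√(2 * π * σ ^ 2))⁻¹
  refine h.congr ?_
  filter_upwards with x
  rw [abs_mul, abs_of_pos (exp_pos _)]
  unfold gw; ring

lemma gw_sq_integrable {σ : ℝ} (hσ : 0 < σ) : Integrable (fun x => x ^ 2 * gw σ x) := by
  have h := (integrable_rpow_mul_exp_neg_mul_sq (hb_pos hσ)
    (by norm_num : (-1:ℝ) < 2)).const_mul (√(2 * π * σ ^ 2))⁻¹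
  refine h.congr ?_
  filter_upwards with x
  rw [show ((2:ℝ)) = ((2:ℕ):ℝ) by norm_num, Real.rpow_natCast]
  unfold gw; ring

lemma gw_hasDerivAt {σ : ℝ} (hσ : 0 < σ) (x : ℝ) :
    HasDerivAt (gw σ) (-(x / σ ^ 2) * gw σ x) x := by
  have h1 : HasDerivAt (fun x : ℝ => -(2 * σ ^ 2)⁻¹ * x ^ 2)
      (-(2 * σ ^ 2)⁻¹ * (2 * x)) x := by
    exact ((hasDerivAt_pow 2 x).const_mul (-(2 * σ ^ 2)⁻¹)).congr_deriv (by norm_num)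
  have h2 := (h1.exp).const_mul (√(2 * π * σ ^ 2))⁻¹
  refine h2.congr_deriv ?_
  unfold gw
  field_simp

lemma gw_tendsto_atTop {σ : ℝ} (hσ : 0 < σ) :
    Tendsto (gw σ) atTop (𝓝 0) := by
  have h := (exp_neg_mul_sq_isLittleO_exp_neg (hb_pos hσ)).trans_tendsto
    (tendsto_exp_atBot.comp tendsto_neg_atTop_atBot)
  have h3 := h.const_mul (√(2 * π * σ ^ 2))⁻¹
  rw [mul_zero] at h3
  unfold gw
  exact h3

lemma gw_abs_tendsto_atTop {σ : ℝ} (hσ : 0 < σ) :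
    Tendsto (fun x => |x| * gw σ x) atTop (𝓝 0) := by
  have hexp : Tendsto (fun x : ℝ => rexp (-(1 / 2) * x)) atTop (𝓝 0) := by
    have h1 : Tendsto (fun x : ℝ => -(1 / 2) * x) atTop atBot := by
      apply Tendsto.const_mul_atTop_of_neg (by norm_num : (-(1/2 : ℝ)) < 0) tendsto_id
    exact tendsto_exp_atBot.comp h1
  have h := (rpow_mul_exp_neg_mul_sq_isLittleO_exp_neg (hb_pos hσ) 1).trans_tendsto hexp
  have h2 : Tendsto (fun x : ℝ => x * rexp (-(2 * σ ^ 2)⁻¹ * x ^ 2)) atTop (𝓝 0) := by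
    apply h.congr'
    filter_upwards [eventually_gt_atTop 0] with x hx
    rw [Real.rpow_one]
  have h3 := h2.const_mul (√(2 * π * σ ^ 2))⁻¹
  rw [mul_zero] at h3
  apply h3.congr'
  filter_upwards [eventually_ge_atTop 0] with x hx
  rw [abs_of_nonneg hx]; unfold gw; ring

lemma gw_abs_tendsto_atBot {σ : ℝ} (hσ : 0 < σ) :
    Tendsto (fun x => |x| * gw σ x) atBot (𝓝 0) := by
  have h := (gw_abs_tendsto_atTop hσ).comp tendsto_neg_atBot_atTop
  apply h.congr
  intro x
  simp only [Function.comp_apply, abs_neg, gw, neg_pow, even_two.neg_pow]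

lemma gw_tendsto_atBot {σ : ℝ} (hσ : 0 < σ) : Tendsto (gw σ) atBot (𝓝 0) := by
  have h := (gw_tendsto_atTop hσ).comp tendsto_neg_atBot_atTop
  apply h.congr
  intro x
  simp only [Function.comp_apply, gw, even_two.neg_pow]

section Stein1d

variable {σ L : ℝ} (hσ : 0 < σ) (hL : 0 ≤ L) {g : ℝ → ℝ}

include hL in
lemma deriv_le_of_lip (hg : Differentiable ℝ g)
    (hLip : ∀ x y : ℝ, |g x - g y| ≤ L * |x - y|) (x : ℝ) : |deriv g x| ≤ L := by
  have lip : LipschitzWith (Real.toNNReal L) g := by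
    apply LipschitzWith.of_dist_le_mul
    intro a b
    rw [Real.coe_toNNReal _ hL, Real.dist_eq, Real.dist_eq]
    exact hLip a b
  have h1 : HasFDerivAt g (ContinuousLinearMap.smulRight (1 : ℝ →L[ℝ] ℝ) (deriv g x)) x :=
    (hg x).hasDerivAt.hasFDerivAt
  have h2 := h1.le_of_lipschitz lip
  rwa [ContinuousLinearMap.norm_smulRight_apply, ContinuousLinearMap.one_def,
    ContinuousLinearMap.norm_id, one_mul, Real.norm_eq_abs, Real.coe_toNNReal _ hL] at h2

lemma abs_le_of_lip (hLip : ∀ x y : ℝ, |g x - g y| ≤ L * |x - y|) (x : ℝ) :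
    |g x| ≤ |g 0| + L * |x| := by
  have := hLip x 0
  simp only [sub_zero] at this
  calc |g x| = |g 0 + (g x - g 0)| := by ring_nf
  _ ≤ |g 0| + |g x - g 0| := abs_add_le _ _
  _ ≤ |g 0| + L * |x| := by linarith

include hσ hL in
lemma stein_vol (hg : Differentiable ℝ g)
    (hLip : ∀ x y : ℝ, |g x - g y| ≤ L * |x - y|) :
    ∫ x, deriv g x * gw σ x = ∫ x, g x * x * gw σ x * (σ ^ 2)⁻¹ := by
  set P := gw σ with hP
  have hPc : Continuous P := gw_cont σ
  have hgc : Continuous g := hg.continuous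
  -- two parts of the derivative
  have ID1 : Integrable (fun x => deriv g x * P x) := by
    refine Integrable.mono' ((gw_integrable hσ).const_mul L)
      ((measurable_deriv g).aestronglyMeasurable.mul hPc.aestronglyMeasurable)
      (Filter.Eventually.of_forall fun x => ?_)
    rw [Real.norm_eq_abs, abs_mul, abs_of_nonneg (gw_nonneg σ x)]
    exact mul_le_mul_of_nonneg_right (deriv_le_of_lip hL hg hLip x) (gw_nonneg σ x)
  have ID2 : Integrable (fun x => g x * (-(x / σ ^ 2) * P x)) := by
    refine Integrable.mono'
      ((((gw_abs_integrable hσ).const_mul (|g 0|)).add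
        ((gw_sq_integrable hσ).const_mul L)).mul_const ((σ ^ 2)⁻¹))
      (hgc.aestronglyMeasurable.mul
        (((continuous_id.div_const _).neg.mul hPc).aestronglyMeasurable))
      (Filter.Eventually.of_forall fun x => ?_)
    rw [Real.norm_eq_abs, abs_mul, abs_mul, abs_neg, abs_div, abs_of_nonneg (gw_nonneg σ x),
      abs_of_pos (by positivity : (0:ℝ) < σ ^ 2)]
    have h1 : |g x| ≤ |g 0| + L * |x| := abs_le_of_lip hLip x
    have h2 : |g x| * (|x| / σ ^ 2 * P x) = (|g x| * (|x| * P x)) * (σ ^ 2)⁻¹ := by ring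
    rw [h2]
    apply mul_le_mul_of_nonneg_right _ (by positivity)
    calc |g x| * (|x| * P x) ≤ (|g 0| + L * |x|) * (|x| * P x) := by
          exact mul_le_mul_of_nonneg_right h1
            (mul_nonneg (abs_nonneg x) (gw_nonneg σ x))
    _ = |g 0| * (|x| * P x) + L * (x ^ 2 * P x) := by rw [← sq_abs x]; ring
  have ID : Integrable (fun x => deriv g x * P x + g x * (-(x / σ ^ 2) * P x)) := ID1.add ID2
  -- F and its derivative
  set F := fun x => g x * P x with hF
  have hFd : ∀ x, HasDerivAt F (deriv g x * P x + g x * (-(x / σ ^ 2) * P x)) x :=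
    fun x => (hg x).hasDerivAt.mul (gw_hasDerivAt hσ x)
  have hFcont : Continuous F := hgc.mul hPc
  -- limits of F
  have hbound : ∀ x, ‖F x‖ ≤ |g 0| * P x + L * (|x| * P x) := by
    intro x
    rw [Real.norm_eq_abs, hF, abs_mul, abs_of_nonneg (gw_nonneg σ x)]
    calc |g x| * P x ≤ (|g 0| + L * |x|) * P x :=
      mul_le_mul_of_nonneg_right (abs_le_of_lip hLip x) (gw_nonneg σ x)
    _ = |g 0| * P x + L * (|x| * P x) := by ring
  have htop : Tendsto F atTop (𝓝 0) := by
    apply squeeze_zero_norm hbound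
    have := ((gw_tendsto_atTop hσ).const_mul (|g 0|)).add
      ((gw_abs_tendsto_atTop hσ).const_mul L)
    simpa using this
  have hbot : Tendsto F atBot (𝓝 0) := by
    apply squeeze_zero_norm hbound
    have := ((gw_tendsto_atBot hσ).const_mul (|g 0|)).add
      ((gw_abs_tendsto_atBot hσ).const_mul L)
    simpa using this
  -- FTC on both halves
  have hIoi := integral_Ioi_of_hasDerivAt_of_tendsto (a := 0)
    hFcont.continuousWithinAt (fun x _ => hFd x) ID.integrableOn htop
  have hIic := integral_Iic_of_hasDerivAt_of_tendsto (a := 0)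
    hFcont.continuousWithinAt (fun x _ => hFd x) ID.integrableOn hbot
  have htotal : ∫ x, (deriv g x * P x + g x * (-(x / σ ^ 2) * P x)) = 0 := by
    rw [← intervalIntegral.integral_Iic_add_Ioi (b := 0) ID.integrableOn ID.integrableOn, hIoi, hIic]
    ring
  rw [integral_add ID1 ID2] at htotal
  have h5 : ∫ x, g x * (-(x / σ ^ 2) * P x) = - ∫ x, g x * x * P x * (σ ^ 2)⁻¹ := by
    rw [← integral_neg]
    congr 1
    funext x
    ring
  rw [h5] at htotal
  linarith

include hσ hL in
lemma stein1d (hg : Differentiable ℝ g)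
    (hLip : ∀ x y : ℝ, |g x - g y| ≤ L * |x - y|) :
    σ ^ 2 * ∫ x, deriv g x ∂(gaussianReal 0 (gvar σ)) =
      ∫ x, g x * x ∂(gaussianReal 0 (gvar σ)) := by
  have hconv : ∀ h : ℝ → ℝ, ∫ x, h x ∂(gaussianReal 0 (gvar σ)) = ∫ x, gw σ x * h x := by
    intro h
    rw [gaussianReal_of_var_ne_zero _ (gvar_ne_zero hσ)]
    have hd : gaussianPDF 0 (gvar σ) =
        fun x => ((Real.toNNReal (gaussianPDFReal 0 (gvar σ) x) : ℝ≥0) : ℝ≥0∞) := rfl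
    rw [hd, integral_withDensity_eq_integral_smul
      ((measurable_gaussianPDFReal 0 (gvar σ)).real_toNNReal) h]
    congr 1
    funext x
    rw [NNReal.smul_def, smul_eq_mul,
      Real.coe_toNNReal _ (gaussianPDFReal_nonneg 0 (gvar σ) x), gw_eq]
  rw [hconv, hconv]
  have h1 : ∫ x, gw σ x * deriv g x = ∫ x, deriv g x * gw σ x := by
    congr 1; funext x; ring
  have h2 : ∫ x, gw σ x * (g x * x) = ∫ x, g x * x * gw σ x := by
    congr 1; funext x; ring
  rw [h1, h2, stein_vol hσ hL hg hLip, integral_mul_const]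
  have : (σ ^ 2 : ℝ) ≠ 0 := by positivity
  field_simp

end Stein1d

section Multi

lemma gauss_toReal_eq (σ : ℝ) (x : ℝ) :
    (gaussianPDF 0 (gvar σ) x).toReal = gw σ x := by
  rw [gaussianPDF, ENNReal.toReal_ofReal (gaussianPDFReal_nonneg _ _ _), gw_eq]

lemma integrable_abs_gauss {σ : ℝ} (hσ : 0 < σ) :
    Integrable (fun x => |x|) (gaussianReal 0 (gvar σ)) := by
  rw [gaussianReal_of_var_ne_zero _ (gvar_ne_zero hσ),
    integrable_withDensity_iff (measurable_gaussianPDF _ _)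
      (ae_of_all _ fun x => ENNReal.ofReal_lt_top)]
  refine (gw_abs_integrable hσ).congr ?_
  filter_upwards with x
  rw [gauss_toReal_eq]

lemma integrable_sq_gauss {σ : ℝ} (hσ : 0 < σ) :
    Integrable (fun x => x ^ 2) (gaussianReal 0 (gvar σ)) := by
  rw [gaussianReal_of_var_ne_zero _ (gvar_ne_zero hσ),
    integrable_withDensity_iff (measurable_gaussianPDF _ _)
      (ae_of_all _ fun x => ENNReal.ofReal_lt_top)]
  refine (gw_sq_integrable hσ).congr ?_
  filter_upwards with x
  rw [gauss_toReal_eq]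

lemma integrable_eval_pi {n : ℕ} (i : Fin (n + 1)) {μ : Measure ℝ} [IsProbabilityMeasure μ]
    {g : ℝ → ℝ} (hg : Integrable g μ) :
    Integrable (fun x : Fin (n + 1) → ℝ => g (x i)) (Measure.pi fun _ => μ) := by
  have hMP := measurePreserving_piFinSuccAbove (fun _ : Fin (n + 1) => μ) i
  have h2 : Integrable (fun p : ℝ × (Fin n → ℝ) => g p.1)
      (μ.prod (Measure.pi fun _ => μ)) := by
    simpa using hg.mul_prod (integrable_const (1 : ℝ))
  have h3 := (hMP.integrable_comp_emb (MeasurableEquiv.measurableEmbedding _)).2 h2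
  refine h3.congr ?_
  filter_upwards with x
  simp [Function.comp, MeasurableEquiv.piFinSuccAbove_apply]

end Multi

/-- Multivariate Stein's lemma for the isotropic Gaussian: for differentiable
`L`-Lipschitz `f : ℝ^d → ℝ`, `σ² ∫ ∇f(z) dγ_σ(z) = ∫ f(z) • z dγ_σ(z)`. -/
theorem stmt3 (d : ℕ) (hd : 1 ≤ d) (σ L : ℝ) (hσ : 0 < σ) (hL : 0 ≤ L)
    (f : EuclideanSpace ℝ (Fin d) → ℝ) (hf : Differentiable ℝ f)
    (hLip : ∀ z z' : EuclideanSpace ℝ (Fin d), |f z - f z'| ≤ L * ‖z - z'‖) :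
    σ ^ 2 • (∫ z, gradient f z ∂(gaussE d σ)) = ∫ z, f z • z ∂(gaussE d σ) := by
  obtain ⟨n, rfl⟩ : ∃ n, d = n + 1 := ⟨d - 1, (Nat.succ_pred_eq_of_pos hd).symm⟩
  set ν : Measure ℝ := gaussianReal 0 (gvar σ) with hν
  set μpi : Measure (Fin (n + 1) → ℝ) := Measure.pi fun _ => ν with hμpi
  set e := (MeasurableEquiv.toLp 2 (Fin (n + 1) → ℝ)).symm with he
  have hV : gaussE (n + 1) σ = μpi.map e.symm := rfl
  have hprob : IsProbabilityMeasure (gaussE (n + 1) σ) := by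
    rw [hV]; exact Measure.isProbabilityMeasure_map e.symm.measurable.aemeasurable
  have hfc : Continuous f := hf.continuous
  have hLipW : LipschitzWith L.toNNReal f := by
    apply LipschitzWith.of_dist_le_mul
    intro a b
    rw [Real.coe_toNNReal _ hL, Real.dist_eq, dist_eq_norm]
    exact hLip a b
  have hfderiv_le : ∀ z : EuclideanSpace ℝ (Fin (n + 1)), ‖fderiv ℝ f z‖ ≤ L := by
    intro z
    have h := ((hf z).hasFDerivAt).le_of_lipschitz hLipW
    rwa [Real.coe_toNNReal _ hL] at h
  have hfabs : ∀ z : EuclideanSpace ℝ (Fin (n + 1)), |f z| ≤ |f 0| + L * ‖z‖ := by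
    intro z
    have h := hLip z 0
    rw [sub_zero] at h
    calc |f z| = |f 0 + (f z - f 0)| := by ring_nf
    _ ≤ |f 0| + |f z - f 0| := abs_add_le _ _
    _ ≤ |f 0| + L * ‖z‖ := by linarith
  have hnormsq : ∀ z : EuclideanSpace ℝ (Fin (n + 1)), ‖z‖ ^ 2 = ∑ j, (z j) ^ 2 := by
    intro z
    rw [EuclideanSpace.norm_eq, Real.sq_sqrt (Finset.sum_nonneg fun j _ => sq_nonneg _)]
    simp [sq_abs]
  -- coordinate integrability
  have hcoord_int : ∀ (g : ℝ → ℝ), Integrable g ν →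
      ∀ j : Fin (n + 1), Integrable (fun z : EuclideanSpace ℝ (Fin (n + 1)) => g (z j)) (gaussE (n + 1) σ) := by
    intro g hg j
    rw [hV, MeasureTheory.integrable_map_equiv]
    exact integrable_eval_pi j hg
  have hsq_int : Integrable (fun z : EuclideanSpace ℝ (Fin (n + 1)) => ‖z‖ ^ 2) (gaussE (n + 1) σ) := by
    have h := integrable_finset_sum (μ := gaussE (n + 1) σ) Finset.univ
      (fun j (_ : j ∈ Finset.univ) => hcoord_int (fun x => x ^ 2) (integrable_sq_gauss hσ) j)
    refine h.congr ?_
    filter_upwards with z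
    rw [hnormsq]
  -- gradient integrable
  have hgradnorm : ∀ z : EuclideanSpace ℝ (Fin (n + 1)), ‖gradient f z‖ ≤ L := by
    intro z
    rw [show gradient f z = (InnerProductSpace.toDual ℝ (EuclideanSpace ℝ (Fin (n + 1)))).symm (fderiv ℝ f z) from rfl,
      LinearIsometryEquiv.norm_map]
    exact hfderiv_le z
  have hIgrad : Integrable (fun z : EuclideanSpace ℝ (Fin (n + 1)) => gradient f z) (gaussE (n + 1) σ) := by
    refine Integrable.mono' (integrable_const L) ?_ (Filter.Eventually.of_forall hgradnorm)
    apply Measurable.aestronglyMeasurable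
    exact ((InnerProductSpace.toDual ℝ (EuclideanSpace ℝ (Fin (n + 1)))).symm.continuous.measurable).comp (measurable_fderiv ℝ f)
  have hIB : Integrable (fun z : EuclideanSpace ℝ (Fin (n + 1)) => f z • z) (gaussE (n + 1) σ) := by
    refine Integrable.mono'
      ((((integrable_const (1 : ℝ)).add hsq_int).const_mul (|f 0|)).add
        (hsq_int.const_mul L))
      ((hfc.smul continuous_id).aestronglyMeasurable)
      (Filter.Eventually.of_forall fun z => ?_)
    simp only [Pi.add_apply]
    rw [norm_smul, Real.norm_eq_abs]
    have h1 : |f z| ≤ |f 0| + L * ‖z‖ := hfabs z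
    have h2 : ‖z‖ ≤ 1 + ‖z‖ ^ 2 := by nlinarith [sq_nonneg (‖z‖ - 1)]
    have h3 : (0:ℝ) ≤ ‖z‖ := norm_nonneg z
    nlinarith [abs_nonneg (f 0), abs_nonneg (f z), mul_le_mul_of_nonneg_right h1 h3,
      mul_le_mul_of_nonneg_left h2 (abs_nonneg (f 0))]
  -- coordinate of gradient
  have hcoordgrad : ∀ (z : EuclideanSpace ℝ (Fin (n + 1))) (i : Fin (n + 1)),
      gradient f z i = fderiv ℝ f z (EuclideanSpace.single i (1 : ℝ)) := by
    intro z i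
    have h1 : ⟪gradient f z, EuclideanSpace.single i (1 : ℝ)⟫ =
        fderiv ℝ f z (EuclideanSpace.single i (1 : ℝ)) :=
      InnerProductSpace.toDual_symm_apply
    rw [← h1, real_inner_comm, EuclideanSpace.inner_single_left]
    simp
  -- main componentwise identity
  have key : ∀ i : Fin (n + 1),
      σ ^ 2 * ∫ z, fderiv ℝ f z (EuclideanSpace.single i (1 : ℝ)) ∂(gaussE (n + 1) σ)
        = ∫ z, f z * z i ∂(gaussE (n + 1) σ) := by
    intro i
    set v := EuclideanSpace.single i (1 : ℝ) with hv
    set Φ := MeasurableEquiv.piFinSuccAbove (fun _ : Fin (n + 1) => ℝ) i with hΦ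
    have hMP := measurePreserving_piFinSuccAbove (fun _ : Fin (n + 1) => ν) i
    -- integrability of the two coordinate functions
    have hIA : Integrable (fun z : EuclideanSpace ℝ (Fin (n + 1)) => fderiv ℝ f z v) (gaussE (n + 1) σ) := by
      have h := (EuclideanSpace.proj i : EuclideanSpace ℝ (Fin (n + 1)) →L[ℝ] ℝ).integrable_comp hIgrad
      refine h.congr ?_
      filter_upwards with z
      exact hcoordgrad z i
    have hIBi : Integrable (fun z : EuclideanSpace ℝ (Fin (n + 1)) => f z * z i) (gaussE (n + 1) σ) := by
      have h := (EuclideanSpace.proj i : EuclideanSpace ℝ (Fin (n + 1)) →L[ℝ] ℝ).integrable_comp hIB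
      refine h.congr ?_
      filter_upwards with z
      simp [smul_eq_mul]
    rw [hV, MeasureTheory.integral_map_equiv, MeasureTheory.integral_map_equiv]
    have hIA' : Integrable (fun x : Fin (n + 1) → ℝ => fderiv ℝ f (e.symm x) v) μpi := by
      have := (MeasureTheory.integrable_map_equiv e.symm
        (fun z : EuclideanSpace ℝ (Fin (n + 1)) => fderiv ℝ f z v)).1 (hV ▸ hIA)
      exact this
    have hIB' : Integrable (fun x : Fin (n + 1) → ℝ => f (e.symm x) * (e.symm x) i) μpi := by
      have := (MeasureTheory.integrable_map_equiv e.symm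
        (fun z : EuclideanSpace ℝ (Fin (n + 1)) => f z * z i)).1 (hV ▸ hIBi)
      exact this
    -- Fubini step
    have hstep : ∀ (G : (Fin (n + 1) → ℝ) → ℝ), Integrable G μpi →
        ∫ x, G x ∂μpi
          = ∫ y, ∫ t, G (Φ.symm (t, y)) ∂ν ∂(Measure.pi fun _ : Fin n => ν) := by
      intro G hG
      have h1 : ∫ x, G x ∂μpi
          = ∫ p, G (Φ.symm p) ∂(ν.prod (Measure.pi fun _ : Fin n => ν)) := by
        rw [← hMP.integral_comp (MeasurableEquiv.measurableEmbedding Φ)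
          (fun p => G (Φ.symm p))]
        congr 1
        funext x
        rw [MeasurableEquiv.symm_apply_apply]
      have hG2 : Integrable (fun p : ℝ × (Fin n → ℝ) => G (Φ.symm p))
          (ν.prod (Measure.pi fun _ : Fin n => ν)) :=
        ((MeasurePreserving.symm Φ hMP).integrable_comp_emb (MeasurableEquiv.measurableEmbedding Φ.symm)).2 hG
      rw [h1]
      exact MeasureTheory.integral_prod_symm _ hG2
    rw [hstep _ hIA', hstep _ hIB', ← MeasureTheory.integral_const_mul]
    apply integral_congr_ae
    filter_upwards with y
    -- inner 1d Stein along coordinate i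
    set ψ : ℝ → EuclideanSpace ℝ (Fin (n + 1)) := fun t => e.symm (Φ.symm (t, y)) with hψ
    have hpi : ∀ t : ℝ, (Φ.symm (t, y) : Fin (n + 1) → ℝ)
        = (Φ.symm (0, y) : Fin (n + 1) → ℝ) + t • (Pi.single i (1 : ℝ) : Fin (n + 1) → ℝ) := by
      intro t
      funext k
      simp only [hΦ, MeasurableEquiv.piFinSuccAbove_symm_apply, Pi.add_apply, Pi.smul_apply,
        smul_eq_mul]
      refine Fin.succAboveCases i ?_ (fun j => ?_) k
      · simp [Fin.insertNthEquiv]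
      · simp [Fin.insertNthEquiv, Pi.single_eq_of_ne (Fin.succAbove_ne i j)]
    have hrep : ∀ t : ℝ, ψ t = ψ 0 + t • v := by
      intro t
      rw [hψ]
      simp only
      rw [hpi t]
      rfl
    have hψd : ∀ t : ℝ, HasDerivAt ψ v t := by
      intro t
      have h := ((hasDerivAt_id t).smul_const v).const_add (ψ 0)
      rw [one_smul] at h
      have hfun : ψ = fun t => ψ 0 + t • v := funext hrep
      rw [hfun]
      exact h
    have hgd : ∀ t : ℝ, HasDerivAt (fun s => f (ψ s)) (fderiv ℝ f (ψ t) v) t := fun t =>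
      ((hf (ψ t)).hasFDerivAt).comp_hasDerivAt t (hψd t)
    have hgdiff : Differentiable ℝ (fun s => f (ψ s)) := fun t => (hgd t).differentiableAt
    have hglip : ∀ t s : ℝ, |f (ψ t) - f (ψ s)| ≤ L * |t - s| := by
      intro t s
      have h := hLip (ψ t) (ψ s)
      have hdiff : ψ t - ψ s = (t - s) • v := by
        rw [hrep t, hrep s, sub_smul]
        abel
      rw [hdiff, norm_smul, Real.norm_eq_abs, hv, EuclideanSpace.norm_single, norm_one,
        mul_one] at h
      exact h
    have h1d := stein1d hσ hL hgdiff hglip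
    have hco : ∀ t : ℝ, (ψ t) i = t := by
      intro t
      show (Φ.symm (t, y) : Fin (n + 1) → ℝ) i = t
      simp [hΦ, MeasurableEquiv.piFinSuccAbove_symm_apply, Fin.insertNthEquiv]
    calc σ ^ 2 * ∫ t, fderiv ℝ f (e.symm (Φ.symm (t, y))) v ∂ν
        = σ ^ 2 * ∫ t, deriv (fun s => f (ψ s)) t ∂ν := by
          congr 1
          apply integral_congr_ae
          filter_upwards with t
          rw [(hgd t).deriv]
    _ = ∫ t, f (ψ t) * t ∂ν := h1d
    _ = ∫ t, f (e.symm (Φ.symm (t, y))) * (e.symm (Φ.symm (t, y))) i ∂ν := by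
          apply integral_congr_ae
          filter_upwards with t
          rw [show (e.symm (Φ.symm (t, y)) : EuclideanSpace ℝ (Fin (n + 1))) = ψ t from rfl, hco t]
  -- assemble
  refine PiLp.ext fun i => ?_
  have hLHS : (σ ^ 2 • ∫ z, gradient f z ∂(gaussE (n + 1) σ)) i
      = σ ^ 2 * ∫ z, fderiv ℝ f z (EuclideanSpace.single i (1 : ℝ)) ∂(gaussE (n + 1) σ) := by
    rw [PiLp.smul_apply, smul_eq_mul]
    congr 1
    calc (∫ z, gradient f z ∂(gaussE (n + 1) σ)) i
        = (EuclideanSpace.proj i : EuclideanSpace ℝ (Fin (n + 1)) →L[ℝ] ℝ)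
            (∫ z, gradient f z ∂(gaussE (n + 1) σ)) := rfl
      _ = ∫ z, (EuclideanSpace.proj i : EuclideanSpace ℝ (Fin (n + 1)) →L[ℝ] ℝ)
            (gradient f z) ∂(gaussE (n + 1) σ) :=
          ((EuclideanSpace.proj i : EuclideanSpace ℝ (Fin (n + 1)) →L[ℝ] ℝ).integral_comp_comm
            hIgrad).symm
      _ = ∫ z, fderiv ℝ f z (EuclideanSpace.single i (1 : ℝ)) ∂(gaussE (n + 1) σ) :=
          integral_congr_ae (Filter.Eventually.of_forall fun z => hcoordgrad z i)
  have hRHS : (∫ z, f z • z ∂(gaussE (n + 1) σ)) i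
      = ∫ z, f z * z i ∂(gaussE (n + 1) σ) := by
    calc (∫ z, f z • z ∂(gaussE (n + 1) σ)) i
        = (EuclideanSpace.proj i : EuclideanSpace ℝ (Fin (n + 1)) →L[ℝ] ℝ)
            (∫ z, f z • z ∂(gaussE (n + 1) σ)) := rfl
      _ = ∫ z, (EuclideanSpace.proj i : EuclideanSpace ℝ (Fin (n + 1)) →L[ℝ] ℝ)
            (f z • z) ∂(gaussE (n + 1) σ) :=
          ((EuclideanSpace.proj i : EuclideanSpace ℝ (Fin (n + 1)) →L[ℝ] ℝ).integral_comp_comm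
            hIB).symm
      _ = ∫ z, f z * z i ∂(gaussE (n + 1) σ) :=
          integral_congr_ae (Filter.Eventually.of_forall fun z => rfl)
  rw [hLHS, hRHS]  -- wrong: goal is coordinate equality
  exact key i
end
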